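/- Let f : R^n -> R be measurable with \int e^f d\gamma_n = 1, let \mu_f be the pushforward of \gamma_n by f, with cumulative distribution function F_f, and let T_f = F_f^{-1} \circ \Phi be the monotone rearrangement map transporting \gamma_1 onto \mu_f. If T_f is \kappa-semiconvex for some \kappa \ge 0 (i.e., x \mapsto T_f(x) + (\kappa/2)x^2 is convex), then for all u \ge (1/2)\log(1+\kappa), \gamma_n(\{f > u\}) \le \overline{\Phi}(\sqrt{2u - \log(1+\kappa)}). -/

import Mathlib

open MeasureTheory Real Set ProbabilityTheory
open MeasureTheory Real Set ProbabilityTheory Filter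

noncomputable def stdGaussian (n : ℕ) : Measure (EuclideanSpace ℝ (Fin n)) :=
  volume.withDensity (fun x => ENNReal.ofReal ((2 * π) ^ (-(n : ℝ) / 2) * Real.exp (-‖x‖ ^ 2 / 2)))

lemma integrable_std_density (n : ℕ) :
    Integrable (fun v : EuclideanSpace ℝ (Fin n) => rexp (-(1/2) * ‖v‖^2)) := by
  have h := (GaussianFourier.integrable_cexp_neg_mul_sq_norm_add (V := EuclideanSpace ℝ (Fin n))
    (b := (1/2:ℂ)) (by norm_num) 0 0).norm
  have : ∀ v : EuclideanSpace ℝ (Fin n), rexp (-(1/2) * ‖v‖^2)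
      = ‖Complex.exp (-(1/2:ℂ) * ‖v‖^2 + 0 * (inner ℝ (0 : EuclideanSpace ℝ (Fin n)) v : ℝ))‖ := by
    intro v
    rw [Complex.norm_exp]
    norm_num
    norm_cast
  exact h.congr (ae_of_all _ fun v => (this v).symm)

instance stdGaussian_prob (n : ℕ) : IsProbabilityMeasure (stdGaussian n) := by
  constructor
  have hint : Integrable (fun v : EuclideanSpace ℝ (Fin n) =>
      (2 * π) ^ (-(n : ℝ) / 2) * rexp (-‖v‖^2 / 2)) := by
    have := (integrable_std_density n).const_mul ((2 * π) ^ (-(n : ℝ) / 2))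
    convert this using 2 with v
    ring_nf
  rw [_root_.stdGaussian, withDensity_apply _ MeasurableSet.univ, Measure.restrict_univ,
    ← ofReal_integral_eq_lintegral_ofReal hint (ae_of_all _ fun v => by positivity)]
  rw [integral_const_mul]
  have hval : ∫ v : EuclideanSpace ℝ (Fin n), rexp (-‖v‖^2 / 2)
      = (2 * π) ^ ((n : ℝ) / 2) := by
    have h := GaussianFourier.integral_rexp_neg_mul_sq_norm (V := EuclideanSpace ℝ (Fin n))
      (b := (1/2:ℝ)) (by norm_num)
    rw [show ∫ v : EuclideanSpace ℝ (Fin n), rexp (-‖v‖^2 / 2)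
        = ∫ v : EuclideanSpace ℝ (Fin n), rexp (-(1/2) * ‖v‖^2) by congr 1; ext v; ring_nf]
    rw [h]
    rw [finrank_euclideanSpace_fin]
    congr 1
    rw [div_div_eq_mul_div, div_one, mul_comm]
  rw [hval, ← Real.rpow_add (by positivity), neg_div]
  norm_num

section CDF
variable {α : Type*} [MeasurableSpace α] (μ : Measure α) [IsProbabilityMeasure μ]
  {g : α → ℝ}

lemma myF_mono : Monotone fun t => (μ {x | g x ≤ t}).toReal := by
  intro s t hst
  exact ENNReal.toReal_mono (measure_ne_top _ _)
    (measure_mono fun x hx => le_trans hx hst)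

lemma myF_exists_ge {c : ℝ} (hc : c < 1) : ∃ t : ℝ, c ≤ (μ {x | g x ≤ t}).toReal := by
  rcases le_or_gt c 0 with h0 | h0
  · exact ⟨0, h0.trans ENNReal.toReal_nonneg⟩
  have hU : ⋃ k : ℕ, {x | g x ≤ (k:ℝ)} = univ := by
    ext x
    simp only [mem_iUnion, mem_univ, iff_true, mem_setOf_eq]
    obtain ⟨k, hk⟩ := exists_nat_ge (g x)
    exact ⟨k, hk⟩
  have h := tendsto_measure_iUnion_atTop (μ := μ) (s := fun k : ℕ => {x | g x ≤ (k:ℝ)})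
    (fun i j hij x hx => show g x ≤ (j:ℝ) from le_trans hx (Nat.cast_le.mpr hij))
  rw [hU, measure_univ] at h
  obtain ⟨k, hk⟩ := (h.eventually (eventually_gt_nhds (ENNReal.ofReal_lt_one.mpr hc))).exists
  exact ⟨k, ((ENNReal.ofReal_lt_iff_lt_toReal h0.le (measure_ne_top _ _)).mp hk).le⟩

lemma myF_exists_lt (hg : Measurable g) {c : ℝ} (hc : 0 < c) :
    ∃ t₀ : ℝ, ∀ t ≤ t₀, (μ {x | g x ≤ t}).toReal < c := by
  have hI : ⋂ k : ℕ, {x | g x ≤ -(k:ℝ)} = (∅ : Set α) := by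
    ext x
    simp only [mem_iInter, mem_setOf_eq, mem_empty_iff_false, iff_false, not_forall]
    obtain ⟨k, hk⟩ := exists_nat_ge (-(g x) + 1)
    exact ⟨k, by push_neg; linarith⟩
  have h := tendsto_measure_iInter_atTop (μ := μ) (s := fun k : ℕ => {x | g x ≤ -(k:ℝ)})
    (fun k => (hg measurableSet_Iic).nullMeasurableSet)
    (fun i j hij x hx => show g x ≤ -(i:ℝ) from le_trans hx (neg_le_neg (Nat.cast_le.mpr hij)))
    ⟨0, measure_ne_top _ _⟩
  rw [hI, measure_empty] at h
  obtain ⟨k, hk⟩ := (h.eventually (eventually_lt_nhds (ENNReal.ofReal_pos.mpr hc))).exists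
  refine ⟨-(k:ℝ), fun t ht => ?_⟩
  have : μ {x | g x ≤ t} < ENNReal.ofReal c :=
    lt_of_le_of_lt (measure_mono fun x hx => le_trans hx ht) hk
  exact ENNReal.toReal_lt_of_lt_ofReal this

lemma myF_right_cont (hg : Measurable g) (u : ℝ) {c : ℝ}
    (hc : ∀ t, u < t → c ≤ (μ {x | g x ≤ t}).toReal) : c ≤ (μ {x | g x ≤ u}).toReal := by
  rcases le_or_gt c 0 with h0 | h0
  · exact h0.trans ENNReal.toReal_nonneg
  have hI : ⋂ k : ℕ, {x | g x ≤ u + 1/((k:ℝ)+1)} = {x | g x ≤ u} := by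
    ext x
    simp only [mem_iInter, mem_setOf_eq]
    constructor
    · intro h
      by_contra hlt
      push_neg at hlt
      obtain ⟨k, hk⟩ := exists_nat_one_div_lt (sub_pos.mpr hlt)
      exact absurd (h k) (by push_neg; linarith [hk])
    · intro h k
      have : (0:ℝ) < 1/((k:ℝ)+1) := by positivity
      linarith
  have h := tendsto_measure_iInter_atTop (μ := μ)
    (s := fun k : ℕ => {x | g x ≤ u + 1/((k:ℝ)+1)})
    (fun k => (hg measurableSet_Iic).nullMeasurableSet)
    (fun i j hij x hx => by
      have hx' : g x ≤ u + 1/((j:ℝ)+1) := hx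
      have h1 : 1/((j:ℝ)+1) ≤ 1/((i:ℝ)+1) := by
        apply one_div_le_one_div_of_le (by positivity)
        exact_mod_cast add_le_add_left (Nat.cast_le.mpr hij) 1
      show g x ≤ u + 1/((i:ℝ)+1)
      linarith)
    ⟨0, measure_ne_top _ _⟩
  rw [hI] at h
  have hle : ∀ k : ℕ, ENNReal.ofReal c ≤ μ {x | g x ≤ u + 1/((k:ℝ)+1)} := by
    intro k
    have hpos : (0:ℝ) < 1/((k:ℝ)+1) := by positivity
    have := hc (u + 1/((k:ℝ)+1)) (by linarith)
    exact ENNReal.ofReal_le_of_le_toReal this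
  have := ge_of_tendsto' h hle
  exact (ENNReal.ofReal_le_iff_le_toReal (measure_ne_top _ _)).mp this

end CDF

noncomputable def Phibar (s : ℝ) : ℝ :=
  (Real.sqrt (2 * π))⁻¹ * ∫ x in Set.Ioi s, Real.exp (-x ^ 2 / 2)


noncomputable def Phi0 (x : ℝ) : ℝ := ((gaussianReal 0 1) (Iic x)).toReal

lemma gaussianReal_pos_of_volume_pos {s : Set ℝ} (h : 0 < volume s) :
    0 < gaussianReal 0 1 s := by
  rcases eq_or_lt_of_le (zero_le : 0 ≤ gaussianReal 0 1 s) with h0 | h0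
  · exact absurd (gaussianReal_absolutelyContinuous' 0 one_ne_zero h0.symm) h.ne'
  · exact h0

lemma Phi0_pos (x : ℝ) : 0 < Phi0 x :=
  ENNReal.toReal_pos (gaussianReal_pos_of_volume_pos (by simp)).ne' (measure_ne_top _ _)

lemma Phi0_lt_one (x : ℝ) : Phi0 x < 1 := by
  have hcompl : gaussianReal 0 1 (Iic x)ᶜ = 1 - gaussianReal 0 1 (Iic x) := by
    rw [measure_compl measurableSet_Iic (measure_ne_top _ _), measure_univ]
  have hpos : 0 < gaussianReal 0 1 (Iic x)ᶜ := by
    rw [compl_Iic]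
    exact gaussianReal_pos_of_volume_pos (by simp)
  have hlt : gaussianReal 0 1 (Iic x) < 1 := by
    by_contra hc
    push_neg at hc
    have h1 : gaussianReal 0 1 (Iic x) = 1 :=
      le_antisymm prob_le_one hc
    rw [h1, tsub_self] at hcompl
    exact hpos.ne' hcompl
  have := ENNReal.toReal_lt_toReal (measure_ne_top _ _) (ENNReal.one_ne_top) |>.mpr hlt
  simpa [Phi0] using this

lemma Phi0_strictMono : StrictMono Phi0 := by
  intro x y hxy
  have hsub : gaussianReal 0 1 (Iic x) < gaussianReal 0 1 (Iic y) := by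
    have hunion : Iic x ∪ Ioc x y = Iic y := Iic_union_Ioc_eq_Iic hxy.le
    have hdisj : Disjoint (Iic x) (Ioc x y) := by
      apply Set.disjoint_left.mpr
      intro a ha hb
      exact absurd hb.1 (not_lt.mpr ha)
    have := measure_union hdisj measurableSet_Ioc (μ := gaussianReal 0 1)
    rw [hunion] at this
    rw [this]
    have hpos : 0 < gaussianReal 0 1 (Ioc x y) :=
      gaussianReal_pos_of_volume_pos (by simp [hxy])
    have hne : gaussianReal 0 1 (Iic x) ≠ ⊤ := measure_ne_top _ _
    exact ENNReal.lt_add_right hne hpos.ne'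
  exact (ENNReal.toReal_lt_toReal (measure_ne_top _ _) (measure_ne_top _ _)).mpr hsub

lemma Phi0_mono : Monotone Phi0 := Phi0_strictMono.monotone

lemma Phi0_continuous : Continuous Phi0 := by
  have key : ∀ x y : ℝ, x ≤ y → Phi0 y - Phi0 x ≤ (Real.sqrt (2 * π))⁻¹ * (y - x) := by
    intro x y hxy
    have hsub : Phi0 y - Phi0 x = (gaussianReal 0 1 (Ioc x y)).toReal := by
      have hunion : Iic x ∪ Ioc x y = Iic y := Iic_union_Ioc_eq_Iic hxy
      have hdisj : Disjoint (Iic x) (Ioc x y) := by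
        apply Set.disjoint_left.mpr
        intro a ha hb
        exact absurd hb.1 (not_lt.mpr ha)
      have h := measure_union hdisj measurableSet_Ioc (μ := gaussianReal 0 1)
      rw [hunion] at h
      rw [Phi0, Phi0, h, ENNReal.toReal_add (measure_ne_top _ _) (measure_ne_top _ _)]
      ring
    rw [hsub]
    have hb : gaussianReal 0 1 (Ioc x y) ≤ ENNReal.ofReal ((Real.sqrt (2 * π))⁻¹ * (y - x)) := by
      rw [gaussianReal_apply 0 one_ne_zero]
      calc ∫⁻ t in Ioc x y, gaussianPDF 0 1 t
          ≤ ∫⁻ _ in Ioc x y, ENNReal.ofReal ((Real.sqrt (2 * π))⁻¹) := by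
            apply lintegral_mono
            intro t
            apply ENNReal.ofReal_le_ofReal
            rw [gaussianPDFReal]
            simp only [NNReal.coe_one, mul_one, sub_zero]
            have h1 : rexp (-t^2/2) ≤ 1 := by
              rw [Real.exp_le_one_iff]
              nlinarith [sq_nonneg t]
            exact mul_le_of_le_one_right (by positivity) h1
        _ = ENNReal.ofReal ((Real.sqrt (2 * π))⁻¹) * volume (Ioc x y) := by
            rw [lintegral_const, Measure.restrict_apply_univ]
        _ = ENNReal.ofReal ((Real.sqrt (2 * π))⁻¹ * (y - x)) := by
            rw [Real.volume_Ioc, ← ENNReal.ofReal_mul (by positivity)]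
    calc (gaussianReal 0 1 (Ioc x y)).toReal
        ≤ (ENNReal.ofReal ((Real.sqrt (2 * π))⁻¹ * (y - x))).toReal :=
          ENNReal.toReal_mono ENNReal.ofReal_ne_top hb
      _ ≤ (Real.sqrt (2 * π))⁻¹ * (y - x) := le_of_eq (ENNReal.toReal_ofReal (mul_nonneg (by positivity) (sub_nonneg.mpr hxy)))
  have hlip : LipschitzWith ⟨(Real.sqrt (2 * π))⁻¹, by positivity⟩ Phi0 := by
    apply LipschitzWith.of_dist_le_mul
    intro x y
    rcases le_total x y with h | h
    · rw [Real.dist_eq, Real.dist_eq, abs_of_nonpos (by linarith [Phi0_mono h]),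
        abs_of_nonpos (by linarith)]
      have := key x y h
      change _ ≤ (Real.sqrt (2 * π))⁻¹ * _
      linarith
    · rw [Real.dist_eq, Real.dist_eq, abs_of_nonneg (by linarith [Phi0_mono h]),
        abs_of_nonneg (by linarith)]
      have := key y x h
      change _ ≤ (Real.sqrt (2 * π))⁻¹ * _
      linarith
  exact hlip.continuous

lemma Phi0_surj {c : ℝ} (h0 : 0 < c) (h1 : c < 1) : ∃ a, Phi0 a = c := by
  obtain ⟨t0, ht0⟩ := myF_exists_lt (gaussianReal 0 1) measurable_id h0
  obtain ⟨t1, ht1⟩ := myF_exists_ge (gaussianReal 0 1) (g := id) h1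
  have hA : Phi0 (min t0 t1) ≤ c := (ht0 (min t0 t1) (min_le_left _ _)).le
  have hB : c ≤ Phi0 (max t0 t1) := le_trans ht1 (Phi0_mono (le_max_right _ _))
  obtain ⟨a, _, ha⟩ := intermediate_value_Icc (min_le_max) Phi0_continuous.continuousOn ⟨hA, hB⟩
  exact ⟨a, ha⟩

lemma measure_gt_Phi0 {c : ℝ} (h0 : 0 ≤ c) (h1 : c ≤ 1) :
    gaussianReal 0 1 {x | c < Phi0 x} = 1 - ENNReal.ofReal c := by
  rcases eq_or_lt_of_le h0 with hc0 | hc0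
  · have hset : {x | c < Phi0 x} = univ := eq_univ_of_forall fun x => hc0 ▸ Phi0_pos x
    rw [hset, measure_univ, ← hc0]
    simp
  rcases eq_or_lt_of_le h1 with hc1 | hc1
  · have hset : {x | c < Phi0 x} = (∅ : Set ℝ) :=
      eq_empty_of_forall_notMem fun x hx => absurd hx (not_lt.mpr (hc1 ▸ (Phi0_lt_one x).le))
    rw [hset, measure_empty, hc1]
    simp
  · obtain ⟨a, ha⟩ := Phi0_surj hc0 hc1
    have hset : {x | c < Phi0 x} = Ioi a := by
      ext x
      simp only [mem_setOf_eq, mem_Ioi, ← ha, Phi0_strictMono.lt_iff_lt]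
    rw [hset, ← compl_Iic, measure_compl measurableSet_Iic (measure_ne_top _ _), measure_univ]
    congr 1
    rw [← ha]
    show gaussianReal 0 1 (Iic a) = ENNReal.ofReal ((gaussianReal 0 1 (Iic a)).toReal)
    rw [ENNReal.ofReal_toReal (measure_ne_top _ _)]

lemma gaussianReal_Ioi_eq (s : ℝ) :
    gaussianReal 0 1 (Ioi s) = ENNReal.ofReal (Phibar s) := by
  rw [gaussianReal_apply_eq_integral 0 one_ne_zero, Phibar, ← integral_const_mul]
  congr 1
  have : (fun x => gaussianPDFReal 0 1 x) = fun x => (Real.sqrt (2*π))⁻¹ * rexp (-x^2/2) := by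
    funext x
    rw [gaussianPDFReal]
    norm_num
  rw [this]

section Galois
variable {α : Type*} [MeasurableSpace α] (μ : Measure α) [IsProbabilityMeasure μ]
  {g : α → ℝ} (hg : Measurable g)

lemma galois (hg : Measurable g) (x u : ℝ) :
    sInf {t : ℝ | Phi0 x ≤ (μ {y | g y ≤ t}).toReal} ≤ u
      ↔ Phi0 x ≤ (μ {y | g y ≤ u}).toReal := by
  set S := {t : ℝ | Phi0 x ≤ (μ {y | g y ≤ t}).toReal} with hS
  have hne : S.Nonempty := myF_exists_ge μ (Phi0_lt_one x)
  have hbdd : BddBelow S := by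
    obtain ⟨t₀, ht₀⟩ := myF_exists_lt μ hg (Phi0_pos x)
    refine ⟨t₀, fun t ht => ?_⟩
    by_contra hlt
    push_neg at hlt
    exact absurd ht (not_le.mpr (ht₀ t hlt.le))
  constructor
  · intro h
    apply myF_right_cont μ hg u
    intro t hut
    obtain ⟨s, hsS, hst⟩ := (csInf_lt_iff hbdd hne).mp (lt_of_le_of_lt h hut)
    exact le_trans hsS (myF_mono μ hst.le)
  · intro h
    exact csInf_le hbdd h

end Galois

lemma exists_subgradient {g : ℝ → ℝ} (hg : ConvexOn ℝ univ g) (x₀ : ℝ) :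
    ∃ p : ℝ, ∀ x, g x₀ + p * (x - x₀) ≤ g x := by
  have key : ∀ y, x₀ < y → ∀ z, z < x₀ →
      (g x₀ - g z) / (x₀ - z) ≤ (g y - g x₀) / (y - x₀) :=
    fun y hy z hz => hg.slope_mono_adjacent trivial trivial hz hy
  set S := (fun y => (g y - g x₀) / (y - x₀)) '' Ioi x₀ with hSdef
  have hne : S.Nonempty := ⟨_, ⟨x₀ + 1, by simp, rfl⟩⟩
  have hbdd : BddBelow S := by
    refine ⟨(g x₀ - g (x₀ - 1)) / (x₀ - (x₀ - 1)), ?_⟩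
    rintro _ ⟨y, hy, rfl⟩
    exact key y hy (x₀ - 1) (by linarith)
  refine ⟨sInf S, fun x => ?_⟩
  rcases lt_trichotomy x x₀ with hx | hx | hx
  · have hle : (g x₀ - g x) / (x₀ - x) ≤ sInf S := by
      apply le_csInf hne
      rintro _ ⟨y, hy, rfl⟩
      exact key y hy x hx
    rw [div_le_iff₀ (by linarith)] at hle
    nlinarith
  · subst hx; simp
  · have hle : sInf S ≤ (g x - g x₀) / (x - x₀) := csInf_le hbdd ⟨x, hx, rfl⟩
    rw [le_div_iff₀ (by linarith)] at hle
    nlinarith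

lemma integrable_exp_quadratic (a b c : ℝ) (hc : 0 < c) :
    Integrable (fun t : ℝ => rexp (a + b * t - c * t ^ 2)) := by
  have hid : ∀ t : ℝ, a + b * t - c * t ^ 2
      = (a + b ^ 2 / (4 * c)) + (-(c * (t - b / (2 * c)) ^ 2)) := by
    intro t
    field_simp
    ring
  simp_rw [hid, Real.exp_add]
  apply Integrable.const_mul
  have h := (integrable_exp_neg_mul_sq hc).comp_sub_right (b / (2 * c))
  simpa [neg_mul] using h

lemma integral_exp_quadratic (a b c : ℝ) (hc : 0 < c) :
    ∫ t : ℝ, rexp (a + b * t - c * t ^ 2)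
      = rexp (a + b ^ 2 / (4 * c)) * Real.sqrt (π / c) := by
  have hid : ∀ t : ℝ, a + b * t - c * t ^ 2
      = (a + b ^ 2 / (4 * c)) + (-(c * (t - b / (2 * c)) ^ 2)) := by
    intro t
    field_simp
    ring
  simp_rw [hid, Real.exp_add]
  rw [integral_const_mul]
  congr 1
  have h1 : ∫ t : ℝ, rexp (-(c * (t - b / (2 * c)) ^ 2))
      = ∫ t : ℝ, rexp (-(c * t ^ 2)) := by
    exact integral_sub_right_eq_self (fun t => rexp (-(c * t ^ 2))) (b / (2 * c))
  rw [h1]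
  simpa [neg_mul] using integral_gaussian c

lemma lintegral_exp_quadratic_gaussian (a b k : ℝ) (hk : 0 ≤ k) :
    ∫⁻ x, ENNReal.ofReal (rexp (a + b * x - k * x ^ 2 / 2)) ∂(gaussianReal 0 1)
      = ENNReal.ofReal (rexp (a + b ^ 2 / (2 * (1 + k))) / Real.sqrt (1 + k)) := by
  have hmg : Measurable fun x : ℝ => ENNReal.ofReal (rexp (a + b * x - k * x ^ 2 / 2)) := by
    fun_prop
  rw [gaussianReal_of_var_ne_zero 0 one_ne_zero,
    lintegral_withDensity_eq_lintegral_mul volume (measurable_gaussianPDF 0 1) hmg]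
  have hpt : ∀ x : ℝ, (gaussianPDF 0 1 * fun x => ENNReal.ofReal (rexp (a + b * x - k * x ^ 2 / 2))) x
      = ENNReal.ofReal ((Real.sqrt (2 * π))⁻¹ * rexp (a + b * x - (1 + k) / 2 * x ^ 2)) := by
    intro x
    simp only [Pi.mul_apply, gaussianPDF, gaussianPDFReal]
    rw [← ENNReal.ofReal_mul (by positivity)]
    congr 1
    rw [mul_assoc, ← Real.exp_add]
    simp only [NNReal.coe_one, mul_one, sub_zero]
    congr 1
    ring
  simp_rw [hpt]
  have hint : Integrable (fun x : ℝ => (Real.sqrt (2 * π))⁻¹ * rexp (a + b * x - (1 + k) / 2 * x ^ 2)) :=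
    (integrable_exp_quadratic a b ((1 + k) / 2) (by linarith)).const_mul _
  rw [← ofReal_integral_eq_lintegral_ofReal hint (ae_of_all _ fun x => by positivity)]
  rw [integral_const_mul, integral_exp_quadratic a b ((1 + k) / 2) (by linarith)]
  congr 1
  have h1 : b ^ 2 / (4 * ((1 + k) / 2)) = b ^ 2 / (2 * (1 + k)) := by
    congr 1
    ring
  have h2 : Real.sqrt (π / ((1 + k) / 2)) = Real.sqrt (2 * π) / Real.sqrt (1 + k) := by
    rw [← Real.sqrt_div' _ (by positivity)]
    · congr 1
      field_simp
  rw [h1, h2]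
  have h3 : Real.sqrt (2 * π) ≠ 0 := by positivity
  field_simp

theorem semiconvex_transport_deviation (n : ℕ) (f : EuclideanSpace ℝ (Fin n) → ℝ)
    (hmeas : Measurable f)
    (hint : ∫ x, Real.exp (f x) ∂(stdGaussian n) = 1)
    (F : ℝ → ℝ) (hF : F = fun t => (stdGaussian n {x | f x ≤ t}).toReal)
    (T : ℝ → ℝ)
    (hT : T = fun u => sInf {t : ℝ | ((ProbabilityTheory.gaussianReal 0 1)
      (Set.Iic u)).toReal ≤ F t})
    (κ : ℝ) (hκ : 0 ≤ κ)
    (hsemi : ConvexOn ℝ Set.univ (fun x => T x + κ / 2 * x ^ 2)) :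
    ∀ u : ℝ, 1 / 2 * Real.log (1 + κ) ≤ u →
      stdGaussian n {x | u < f x}
        ≤ ENNReal.ofReal (Phibar (Real.sqrt (2 * u - Real.log (1 + κ)))) := by
  subst hF
  subst hT
  set γ := gaussianReal 0 1 with hγ
  set γn := stdGaussian n with hγn
  set F : ℝ → ℝ := fun t => (γn {x | f x ≤ t}).toReal with hF
  set T : ℝ → ℝ := fun u => sInf {t : ℝ | Phi0 u ≤ F t} with hT
  have hsemi' : ConvexOn ℝ Set.univ (fun x => T x + κ / 2 * x ^ 2) := hsemi
  -- the Galois connection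
  have hgal : ∀ x u : ℝ, T x ≤ u ↔ Phi0 x ≤ F u := fun x u => galois γn hmeas x u
  -- monotonicity of T
  have hTmono : Monotone T := by
    intro x y hxy
    exact (hgal x (T y)).mpr (le_trans (Phi0_mono hxy) ((hgal y (T y)).mp le_rfl))
  have hTmeas : Measurable T := hTmono.measurable
  -- tail identity
  have hF01 : ∀ u : ℝ, 0 ≤ F u ∧ F u ≤ 1 := by
    intro u
    refine ⟨ENNReal.toReal_nonneg, ?_⟩
    have := ENNReal.toReal_mono ENNReal.one_ne_top (prob_le_one (μ := γn) (s := {x | f x ≤ u}))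
    simpa using this
  have htail : ∀ u : ℝ, γn {x | u < f x} = γ {x | u < T x} := by
    intro u
    have hset : {x : ℝ | u < T x} = {x : ℝ | F u < Phi0 x} := by
      ext x
      simp only [mem_setOf_eq, ← not_le, hgal x u]
    rw [hset, measure_gt_Phi0 (hF01 u).1 (hF01 u).2]
    have hcompl : {x | u < f x} = {x | f x ≤ u}ᶜ := by
      ext x
      simp [not_le]
    rw [hcompl, measure_compl (show MeasurableSet {x | f x ≤ u} from hmeas measurableSet_Iic) (measure_ne_top _ _), measure_univ]
    congr 1
    exact (ENNReal.ofReal_toReal (measure_ne_top _ _)).symm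
  -- ∫⁻ e^T dγ = 1
  have hfint : Integrable (fun x => rexp (f x)) γn := by
    by_contra h
    rw [integral_undef h] at hint
    norm_num at hint
  have hexpT : ∫⁻ x, ENNReal.ofReal (rexp (T x)) ∂γ = 1 := by
    have h1 : ∫⁻ x, ENNReal.ofReal (rexp (T x)) ∂γ
        = ∫⁻ s in Ioi (0:ℝ), γ {x | s < rexp (T x)} :=
      lintegral_eq_lintegral_meas_lt γ (ae_of_all _ fun x => (Real.exp_pos _).le)
        (Real.measurable_exp.comp hTmeas).aemeasurable
    have h2 : ∫⁻ x, ENNReal.ofReal (rexp (f x)) ∂γn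
        = ∫⁻ s in Ioi (0:ℝ), γn {x | s < rexp (f x)} :=
      lintegral_eq_lintegral_meas_lt γn (ae_of_all _ fun x => (Real.exp_pos _).le)
        (Real.measurable_exp.comp hmeas).aemeasurable
    have h3 : ∫⁻ s in Ioi (0:ℝ), γ {x | s < rexp (T x)}
        = ∫⁻ s in Ioi (0:ℝ), γn {x | s < rexp (f x)} := by
      apply setLIntegral_congr_fun measurableSet_Ioi
      intro s hs
      have hT' : {x : ℝ | s < rexp (T x)} = {x : ℝ | Real.log s < T x} := by
        ext x
        simp only [mem_setOf_eq]
        exact (Real.log_lt_iff_lt_exp hs).symm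
      have hf' : {x : EuclideanSpace ℝ (Fin n) | s < rexp (f x)}
          = {x : EuclideanSpace ℝ (Fin n) | Real.log s < f x} := by
        ext x
        simp only [mem_setOf_eq]
        exact (Real.log_lt_iff_lt_exp hs).symm
      show γ {x | s < rexp (T x)} = γn {x | s < rexp (f x)}
      rw [hT', hf', htail]
    rw [h1, h3, ← h2, ← ofReal_integral_eq_lintegral_ofReal hfint
      (ae_of_all _ fun x => (Real.exp_pos _).le), hint, ENNReal.ofReal_one]
  -- pointwise bound on T
  have hbound : ∀ x : ℝ, T x ≤ x ^ 2 / 2 + Real.log (1 + κ) / 2 := by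
    intro x₀
    obtain ⟨p, hp⟩ := exists_subgradient hsemi' x₀
    set θ : ℝ → ℝ := fun x => T x + κ / 2 * x ^ 2 with hθ
    have hptw : ∀ x : ℝ, ENNReal.ofReal (rexp ((θ x₀ - p * x₀) + p * x - κ * x ^ 2 / 2))
        ≤ ENNReal.ofReal (rexp (T x)) := by
      intro x
      apply ENNReal.ofReal_le_ofReal
      apply Real.exp_le_exp.mpr
      have := hp x
      simp only [hθ] at this ⊢
      nlinarith [this]
    have hle : ENNReal.ofReal (rexp ((θ x₀ - p * x₀) + p ^ 2 / (2 * (1 + κ))) / Real.sqrt (1 + κ))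
        ≤ 1 := by
      rw [← lintegral_exp_quadratic_gaussian (θ x₀ - p * x₀) p κ hκ, ← hexpT]
      exact lintegral_mono hptw
    have hsq : (0:ℝ) < Real.sqrt (1 + κ) := Real.sqrt_pos.mpr (by linarith)
    have hr : rexp ((θ x₀ - p * x₀) + p ^ 2 / (2 * (1 + κ))) / Real.sqrt (1 + κ) ≤ 1 :=
      ENNReal.ofReal_le_one.mp hle
    have hr2 : rexp ((θ x₀ - p * x₀) + p ^ 2 / (2 * (1 + κ))) ≤ Real.sqrt (1 + κ) := by
      rw [div_le_one hsq] at hr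
      exact hr
    have hr3 : (θ x₀ - p * x₀) + p ^ 2 / (2 * (1 + κ)) ≤ Real.log (1 + κ) / 2 := by
      have := (Real.le_log_iff_exp_le hsq).mpr hr2
      rwa [Real.log_sqrt (by linarith)] at this
    -- AM-GM step
    have hamgm : p * x₀ - p ^ 2 / (2 * (1 + κ)) ≤ (1 + κ) * x₀ ^ 2 / 2 := by
      have h1 : (0:ℝ) < 1 + κ := by linarith
      have h2 : 0 ≤ (p - (1 + κ) * x₀) ^ 2 := sq_nonneg _
      have h3 : p ^ 2 / (2 * (1 + κ)) * (2 * (1 + κ)) = p ^ 2 :=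
        div_mul_cancel₀ _ (by positivity)
      nlinarith [h2, h3, h1, sq_nonneg x₀, mul_pos h1 h1]
    have hθx : θ x₀ ≤ (1 + κ) * x₀ ^ 2 / 2 + Real.log (1 + κ) / 2 := by linarith
    have : T x₀ = θ x₀ - κ / 2 * x₀ ^ 2 := by simp [hθ]
    rw [this]
    linarith
  -- conclusion
  intro u hu
  have h2uL : 0 ≤ 2 * u - Real.log (1 + κ) := by linarith
  set s := Real.sqrt (2 * u - Real.log (1 + κ)) with hs
  have hs2 : s ^ 2 = 2 * u - Real.log (1 + κ) := Real.sq_sqrt h2uL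
  have hTs : T s ≤ u := le_trans (hbound s) (by rw [hs2]; linarith)
  rw [htail u]
  have hsub : {x : ℝ | u < T x} ⊆ Ioi s := by
    intro x hx
    by_contra hxs
    have hxs' : x ≤ s := not_lt.mp (by simpa using hxs)
    exact absurd hx (not_lt.mpr (le_trans (hTmono hxs') hTs))
  calc γ {x : ℝ | u < T x} ≤ γ (Ioi s) := measure_mono hsub
    _ = ENNReal.ofReal (Phibar s) := gaussianReal_Ioi_eq s
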